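/- The switching lemma for random currents: for a finite graph G = (V,E), any function F : ℕ^E → ℝ, and any two subsets A, B ⊆ V, Σ_{∂n₁=A, ∂n₂=B} w(n₁)w(n₂)F(n₁+n₂) = Σ_{∂n₁=AΔB, ∂n₂=∅} w(n₁)w(n₂)F(n₁+n₂) 𝟙(n₁+n₂ ∈ F_B), where n ∈ F_B means there exists a current k ≤ n (pointwise) with ∂k = B, and AΔB is the symmetric difference. -/

import Mathlib

open Finset
open scoped symmDiff

/-- The spin value attached to a Boolean: `+1` or `-1`. -/
noncomputable def spin (b : Bool) : ℝ := if b then 1 else -1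

/-- Interaction energy `Σ_{{x,y}∈E} σ_x σ_y` of a spin configuration. -/
noncomputable def interaction {V : Type*} [Fintype V] [DecidableEq V]
    (G : SimpleGraph V) [DecidableRel G.Adj] (σ : V → Bool) : ℝ :=
  ∑ e ∈ G.edgeFinset,
    Sym2.lift ⟨fun x y => spin (σ x) * spin (σ y), fun _ _ => by ring⟩ e

/-- The weight `w_β(n) = Π_{e∈E} β^{n_e}/n_e!` of a current `n : E → ℕ`. -/
noncomputable def currentWeight {V : Type*} [Fintype V] [DecidableEq V]
    (G : SimpleGraph V) [DecidableRel G.Adj] (β : ℝ)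
    (n : ↥G.edgeFinset → ℕ) : ℝ :=
  ∏ e : ↥G.edgeFinset, β ^ (n e) / (Nat.factorial (n e) : ℝ)

/-- The source set `∂n` of a current: the vertices whose total incident current
`Δ_x(n) = Σ_{y : {x,y}∈E} n_{{x,y}}` is odd. -/
def sources {V : Type*} [Fintype V] [DecidableEq V]
    (G : SimpleGraph V) [DecidableRel G.Adj] (n : ↥G.edgeFinset → ℕ) : Finset V :=
  Finset.univ.filter fun x =>
    ¬ Even (∑ e : ↥G.edgeFinset, if x ∈ (↑e : Sym2 V) then n e else 0)


section Aux

variable {V : Type*} [Fintype V] [DecidableEq V]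
    (G : SimpleGraph V) [DecidableRel G.Adj]

lemma sources_congr_mod (k₁ k₂ : ↥G.edgeFinset → ℕ)
    (h : ∀ e, k₁ e % 2 = k₂ e % 2) : sources G k₁ = sources G k₂ := by
  ext x
  simp only [sources, mem_filter, mem_univ, true_and]
  have : (∑ e : ↥G.edgeFinset, if x ∈ (↑e : Sym2 V) then k₁ e else 0) % 2
      = (∑ e : ↥G.edgeFinset, if x ∈ (↑e : Sym2 V) then k₂ e else 0) % 2 := by
    rw [Finset.sum_nat_mod, Finset.sum_nat_mod _ 2 (fun (e : ↥G.edgeFinset) => if x ∈ (↑e : Sym2 V) then k₂ e else 0)]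
    congr 2
    funext e
    split_ifs
    · exact h e
    · rfl
  rw [Nat.even_iff, Nat.even_iff, this]

lemma sources_add (k₁ k₂ : ↥G.edgeFinset → ℕ) :
    sources G (k₁ + k₂) = symmDiff (sources G k₁) (sources G k₂) := by
  ext x
  simp only [sources, Finset.mem_symmDiff, mem_filter, mem_univ, true_and, Pi.add_apply]
  rw [show (∑ e : ↥G.edgeFinset, if x ∈ (↑e : Sym2 V) then k₁ e + k₂ e else 0)
      = (∑ e : ↥G.edgeFinset, if x ∈ (↑e : Sym2 V) then k₁ e else 0)
        + (∑ e : ↥G.edgeFinset, if x ∈ (↑e : Sym2 V) then k₂ e else 0) by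
    rw [← Finset.sum_add_distrib]
    exact Finset.sum_congr rfl fun e _ => by split_ifs <;> simp]
  rw [Nat.even_add]
  tauto

lemma currentWeight_pos {β : ℝ} (hβ : 0 < β) (n : ↥G.edgeFinset → ℕ) :
    0 < currentWeight G β n := by
  apply Finset.prod_pos
  intro e _
  positivity

lemma currentWeight_factor {β : ℝ} {k m : ↥G.edgeFinset → ℕ} (hk : k ≤ m) :
    currentWeight G β k * currentWeight G β (m - k)
      = currentWeight G β m * ∏ e, ((m e).choose (k e) : ℝ) := by
  unfold currentWeight
  rw [← Finset.prod_mul_distrib, ← Finset.prod_mul_distrib]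
  apply Finset.prod_congr rfl
  intro e _
  have h := Nat.choose_mul_factorial_mul_factorial (hk e)
  have hm : ((m e).factorial : ℝ)
      = ((m e).choose (k e) : ℝ) * (k e).factorial * (m e - k e).factorial := by
    exact_mod_cast h.symm
  have hpow : β ^ (k e) * β ^ (m e - k e) = β ^ (m e) := by
    rw [← pow_add, Nat.add_sub_cancel' (hk e)]
  have h1 : ((k e).factorial : ℝ) ≠ 0 := Nat.cast_ne_zero.mpr (Nat.factorial_ne_zero _)
  have h2 : ((m e - k e).factorial : ℝ) ≠ 0 := Nat.cast_ne_zero.mpr (Nat.factorial_ne_zero _)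
  have h3 : ((m e).factorial : ℝ) ≠ 0 := Nat.cast_ne_zero.mpr (Nat.factorial_ne_zero _)
  show β ^ (k e) / _ * (β ^ ((m - k) e) / _) = _
  rw [Pi.sub_apply]
  field_simp
  rw [hm, ← hpow]
  ring

end Aux

section Aux2

variable {V : Type*} [Fintype V] [DecidableEq V]
    (G : SimpleGraph V) [DecidableRel G.Adj]

lemma card_profile_fiber (m k : ↥G.edgeFinset → ℕ) :
    (Finset.univ.filter fun S : ∀ e : ↥G.edgeFinset, Finset (Fin (m e)) =>
        (fun e => (S e).card) = k).card
      = ∏ e, (m e).choose (k e) := by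
  classical
  rw [← Fintype.card_subtype]
  have e : {S : ∀ e : ↥G.edgeFinset, Finset (Fin (m e)) // (fun e => (S e).card) = k}
      ≃ ∀ e : ↥G.edgeFinset, {s : Finset (Fin (m e)) // s.card = k e} :=
    (Equiv.subtypeEquivRight fun S => funext_iff).trans
      (Equiv.subtypePiEquivPi (p := fun e (s : Finset (Fin (m e))) => s.card = k e))
  rw [Fintype.card_congr e, Fintype.card_pi]
  exact Finset.prod_congr rfl fun e _ => by
    rw [Fintype.card_finset_len, Fintype.card_fin]

lemma sum_Iic_choose (m : ↥G.edgeFinset → ℕ) (P : (↥G.edgeFinset → ℕ) → ℝ) :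
    ∑ k ∈ Finset.Iic m, (∏ e, ((m e).choose (k e) : ℝ)) * P k
      = ∑ S : ∀ e : ↥G.edgeFinset, Finset (Fin (m e)), P (fun e => (S e).card) := by
  classical
  have h1 : ∑ S : ∀ e : ↥G.edgeFinset, Finset (Fin (m e)), P (fun e => (S e).card)
      = ∑ k ∈ Finset.Iic m, ∑ S ∈ Finset.univ.filter
          (fun S : ∀ e : ↥G.edgeFinset, Finset (Fin (m e)) => (fun e => (S e).card) = k),
          P (fun e => (S e).card) := by
    rw [Finset.sum_fiberwise_of_maps_to]
    intro S _
    rw [Finset.mem_Iic]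
    intro e
    simpa using Finset.card_le_univ (S e)
  rw [h1]
  refine Finset.sum_congr rfl fun k _ => ?_
  rw [Finset.sum_congr rfl (fun S hS => by rw [(Finset.mem_filter.mp hS).2]),
    Finset.sum_const, card_profile_fiber, nsmul_eq_mul, Nat.cast_prod]

open scoped Classical in
lemma star_identity (m : ↥G.edgeFinset → ℕ) (A B : Finset V) :
    ∑ k ∈ Finset.Iic m, (∏ e, ((m e).choose (k e) : ℝ)) *
        (if sources G k = A ∧ sources G (m - k) = B then (1:ℝ) else 0)
      = ∑ k ∈ Finset.Iic m, (∏ e, ((m e).choose (k e) : ℝ)) *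
        (if sources G k = symmDiff A B ∧ sources G (m - k) = ∅ ∧
            (∃ k' : ↥G.edgeFinset → ℕ, k' ≤ m ∧ sources G k' = B) then (1:ℝ) else 0) := by
  rw [sum_Iic_choose, sum_Iic_choose]
  have hcard : ∀ (S : ∀ e : ↥G.edgeFinset, Finset (Fin (m e))) e, (S e).card ≤ m e :=
    fun S e => by simpa using Finset.card_le_univ (S e)
  have hsub : ∀ S : ∀ e : ↥G.edgeFinset, Finset (Fin (m e)),
      sources G (m - fun e => (S e).card)
        = symmDiff (sources G m) (sources G fun e => (S e).card) := by
    intro S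
    have hmod : ∀ e, (m - fun e => (S e).card) e % 2 = (m + fun e => (S e).card) e % 2 := by
      intro e
      have := hcard S e
      simp only [Pi.sub_apply, Pi.add_apply]
      omega
    rw [sources_congr_mod G _ _ hmod, sources_add]
  by_cases hB : ∃ k' : ↥G.edgeFinset → ℕ, k' ≤ m ∧ sources G k' = B
  · obtain ⟨k₀, hk₀m, hk₀B⟩ := hB
    have hex : ∀ e : ↥G.edgeFinset, ∃ s : Finset (Fin (m e)), s.card = k₀ e := by
      intro e
      obtain ⟨t, -, ht⟩ := Finset.exists_subset_card_eq
        (show k₀ e ≤ (Finset.univ : Finset (Fin (m e))).card by simpa using hk₀m e)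
      exact ⟨t, ht⟩
    choose S₀ hS₀ using hex
    have hφS₀ : sources G (fun e => (S₀ e).card) = B := by
      rw [show (fun e => (S₀ e).card) = k₀ from funext hS₀]; exact hk₀B
    have key : ∀ S : ∀ e : ↥G.edgeFinset, Finset (Fin (m e)),
        sources G (fun e => ((S e) ∆ (S₀ e)).card)
          = symmDiff (sources G fun e => (S e).card) B := by
      intro S
      have hmod : ∀ e, ((S e) ∆ (S₀ e)).card % 2
          = (((fun e => (S e).card) + fun e => (S₀ e).card) e) % 2 := by
        intro e
        have h1 := Finset.card_sdiff_add_card_inter (S e) (S₀ e)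
        have h2 := Finset.card_sdiff_add_card_inter (S₀ e) (S e)
        have h3 : ((S e) ∆ (S₀ e)).card = (S e \ S₀ e).card + (S₀ e \ S e).card := by
          rw [symmDiff_def, sup_eq_union, Finset.card_union_of_disjoint
            (disjoint_sdiff_sdiff)]
        rw [Finset.inter_comm] at h2
        simp only [Pi.add_apply]
        omega
      rw [sources_congr_mod G _ _ hmod, sources_add, hφS₀]
    apply Fintype.sum_bijective (fun S e => (S e) ∆ (S₀ e))
      (Function.Involutive.bijective fun S => funext fun e => symmDiff_symmDiff_cancel_right _ _)
    intro S
    simp only [hsub, key]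
    set a := sources G (fun e => (S e).card) with ha
    set D := sources G m with hD
    apply if_congr _ rfl rfl
    constructor
    · rintro ⟨h1, h2⟩
      have hDa : D = B ∆ a := by rw [← h2, symmDiff_symmDiff_cancel_right]
      refine ⟨by rw [h1], ?_, ⟨k₀, hk₀m, hk₀B⟩⟩
      rw [hDa, h1, symmDiff_comm A B, symmDiff_self, Finset.bot_eq_empty]
    · rintro ⟨h1, h2, -⟩
      have ha' : a = A :=
        calc a = a ∆ B ∆ B := (symmDiff_symmDiff_cancel_right B a).symm
        _ = A ∆ B ∆ B := by rw [h1]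
        _ = A := symmDiff_symmDiff_cancel_right B A
      have hDa : D = a ∆ B := by
        rw [← Finset.bot_eq_empty] at h2
        exact symmDiff_eq_bot.mp h2
      refine ⟨ha', ?_⟩
      rw [hDa, symmDiff_comm a B, symmDiff_symmDiff_cancel_right]
  · refine (Finset.sum_eq_zero fun S _ => ?_).trans (Finset.sum_eq_zero fun S _ => ?_).symm
    · rw [if_neg]
      rintro ⟨-, h2⟩
      exact hB ⟨m - fun e => (S e).card, fun e => Nat.sub_le _ _, h2⟩
    · rw [if_neg]
      rintro ⟨-, -, h⟩
      exact hB h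

end Aux2

lemma tsum_sigma_congr {α : Type*} {π : α → Type*} [∀ a, Fintype (π a)]
    (f g : (Σ a, π a) → ℝ)
    (h1 : ∀ a, ∑ b, f ⟨a, b⟩ = ∑ b, g ⟨a, b⟩)
    (h2 : ∀ a, ∑ b, |f ⟨a, b⟩| = ∑ b, |g ⟨a, b⟩|) :
    ∑' x, f x = ∑' x, g x := by
  have summ : ∀ (f g : (Σ a, π a) → ℝ),
      (∀ a, ∑ b, |f ⟨a, b⟩| = ∑ b, |g ⟨a, b⟩|) → Summable f → Summable g := by
    intro f g h2 hf
    rw [← summable_abs_iff] at hf ⊢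
    rw [summable_sigma_of_nonneg (fun _ => abs_nonneg _)] at hf ⊢
    refine ⟨fun a => Summable.of_finite, ?_⟩
    have := hf.2
    have heq : (fun a => ∑' b, |g ⟨a, b⟩|) = fun a => ∑' b, |f ⟨a, b⟩| := by
      funext a
      rw [tsum_fintype, tsum_fintype, h2]
    rw [heq]
    exact this
  by_cases hf : Summable f
  · have hg : Summable g := summ f g h2 hf
    rw [Summable.tsum_sigma hf, Summable.tsum_sigma hg]
    apply tsum_congr
    intro a
    rw [tsum_fintype, tsum_fintype, h1]
  · have hg : ¬ Summable g := fun h => hf (summ g f (fun a => (h2 a).symm) h)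
    rw [tsum_eq_zero_of_not_summable hf, tsum_eq_zero_of_not_summable hg]
set_option maxHeartbeats 1000000 in
open scoped Classical in
theorem switching_lemma {V : Type*} [Fintype V] [DecidableEq V]
    (G : SimpleGraph V) [DecidableRel G.Adj] (β : ℝ) (hβ : 0 < β)
    (F : (↥G.edgeFinset → ℕ) → ℝ) (A B : Finset V) :
    (∑' p : (↥G.edgeFinset → ℕ) × (↥G.edgeFinset → ℕ),
        if sources G p.1 = A ∧ sources G p.2 = B then
          currentWeight G β p.1 * currentWeight G β p.2 * F (p.1 + p.2) else 0) =
      ∑' p : (↥G.edgeFinset → ℕ) × (↥G.edgeFinset → ℕ),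
        if sources G p.1 = (symmDiff A B) ∧ sources G p.2 = ∅ ∧
            (∃ k : ↥G.edgeFinset → ℕ, k ≤ p.1 + p.2 ∧ sources G k = B) then
          currentWeight G β p.1 * currentWeight G β p.2 * F (p.1 + p.2) else 0 := by
  set fL : (↥G.edgeFinset → ℕ) × (↥G.edgeFinset → ℕ) → ℝ := fun p =>
    if sources G p.1 = A ∧ sources G p.2 = B then
      currentWeight G β p.1 * currentWeight G β p.2 * F (p.1 + p.2) else 0 with hfL
  set fR : (↥G.edgeFinset → ℕ) × (↥G.edgeFinset → ℕ) → ℝ := fun p =>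
    if sources G p.1 = (symmDiff A B) ∧ sources G p.2 = ∅ ∧
        (∃ k : ↥G.edgeFinset → ℕ, k ≤ p.1 + p.2 ∧ sources G k = B) then
      currentWeight G β p.1 * currentWeight G β p.2 * F (p.1 + p.2) else 0 with hfR
  -- the reindexing equivalence
  let e1 : ((↥G.edgeFinset → ℕ) × (↥G.edgeFinset → ℕ))
      ≃ (Σ m : ↥G.edgeFinset → ℕ, ↥(Finset.Iic m)) :=
  { toFun := fun p => ⟨p.1 + p.2, ⟨p.1, Finset.mem_Iic.mpr le_self_add⟩⟩
    invFun := fun t => ((t.2 : ↥G.edgeFinset → ℕ), t.1 - (t.2 : ↥G.edgeFinset → ℕ))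
    left_inv := fun p => by
      obtain ⟨p₁, p₂⟩ := p
      have h2 : (p₁ + p₂) - p₁ = p₂ := funext fun e => by
        show p₁ e + p₂ e - p₁ e = p₂ e
        omega
      show (p₁, (p₁ + p₂) - p₁) = (p₁, p₂)
      rw [h2]
    right_inv := fun t => by
      obtain ⟨m, k, hk⟩ := t
      have hk' := Finset.mem_Iic.mp hk
      have hm : (k : ↥G.edgeFinset → ℕ) + (m - k) = m :=
        funext fun e => Nat.add_sub_cancel' (hk' e)
      refine Sigma.ext hm ((Subtype.heq_iff_coe_eq ?_).mpr rfl)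
      intro x
      show x ∈ Finset.Iic ((k : ↥G.edgeFinset → ℕ) + (m - k)) ↔ x ∈ Finset.Iic m
      rw [hm] }
  -- fiber sums, left-hand side condition
  have hfiberL : ∀ (m : ↥G.edgeFinset → ℕ) (c : ℝ),
      (∑ k : ↥(Finset.Iic m), (if sources G (k : ↥G.edgeFinset → ℕ) = A ∧
          sources G (m - (k : ↥G.edgeFinset → ℕ)) = B then
          currentWeight G β (k : ↥G.edgeFinset → ℕ)
            * currentWeight G β (m - (k : ↥G.edgeFinset → ℕ)) * c else 0))
        = currentWeight G β m * c * ∑ k ∈ Finset.Iic m,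
            (∏ e, ((m e).choose (k e) : ℝ)) *
              (if sources G k = A ∧ sources G (m - k) = B then (1:ℝ) else 0) := by
    intro m c
    rw [Finset.sum_coe_sort (Finset.Iic m)
      (fun k => if sources G k = A ∧ sources G (m - k) = B then
        currentWeight G β k * currentWeight G β (m - k) * c else 0), Finset.mul_sum]
    refine Finset.sum_congr rfl fun k hk => ?_
    have hk' := Finset.mem_Iic.mp hk
    split_ifs with h
    · rw [currentWeight_factor G hk']
      ring
    · ring
  -- fiber sums, right-hand side condition
  have hfiberR : ∀ (m : ↥G.edgeFinset → ℕ) (c : ℝ),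
      (∑ k : ↥(Finset.Iic m), (if sources G (k : ↥G.edgeFinset → ℕ) = (symmDiff A B) ∧
          sources G (m - (k : ↥G.edgeFinset → ℕ)) = ∅ ∧
          (∃ k' : ↥G.edgeFinset → ℕ, k' ≤ m ∧ sources G k' = B) then
          currentWeight G β (k : ↥G.edgeFinset → ℕ)
            * currentWeight G β (m - (k : ↥G.edgeFinset → ℕ)) * c else 0))
        = currentWeight G β m * c * ∑ k ∈ Finset.Iic m,
            (∏ e, ((m e).choose (k e) : ℝ)) *
              (if sources G k = (symmDiff A B) ∧ sources G (m - k) = ∅ ∧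
                (∃ k' : ↥G.edgeFinset → ℕ, k' ≤ m ∧ sources G k' = B) then (1:ℝ) else 0) := by
    intro m c
    rw [Finset.sum_coe_sort (Finset.Iic m)
      (fun k => if sources G k = (symmDiff A B) ∧ sources G (m - k) = ∅ ∧
          (∃ k' : ↥G.edgeFinset → ℕ, k' ≤ m ∧ sources G k' = B) then
        currentWeight G β k * currentWeight G β (m - k) * c else 0), Finset.mul_sum]
    refine Finset.sum_congr rfl fun k hk => ?_
    have hk' := Finset.mem_Iic.mp hk
    split_ifs with h
    · rw [currentWeight_factor G hk']
      ring
    · ring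
  -- values of the transported summands
  have hLval : ∀ (m : ↥G.edgeFinset → ℕ) (k : ↥(Finset.Iic m)),
      fL (e1.symm ⟨m, k⟩) = (if sources G (k : ↥G.edgeFinset → ℕ) = A ∧
          sources G (m - (k : ↥G.edgeFinset → ℕ)) = B then
        currentWeight G β (k : ↥G.edgeFinset → ℕ)
          * currentWeight G β (m - (k : ↥G.edgeFinset → ℕ)) * F m else 0) := by
    rintro m ⟨k, hk⟩
    have hk' := Finset.mem_Iic.mp hk
    have hm : (k : ↥G.edgeFinset → ℕ) + (m - k) = m :=
      funext fun e => Nat.add_sub_cancel' (hk' e)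
    simp only [hfL, e1, Equiv.coe_fn_symm_mk, hm]
  have hRval : ∀ (m : ↥G.edgeFinset → ℕ) (k : ↥(Finset.Iic m)),
      fR (e1.symm ⟨m, k⟩) = (if sources G (k : ↥G.edgeFinset → ℕ) = (symmDiff A B) ∧
          sources G (m - (k : ↥G.edgeFinset → ℕ)) = ∅ ∧
          (∃ k' : ↥G.edgeFinset → ℕ, k' ≤ m ∧ sources G k' = B) then
        currentWeight G β (k : ↥G.edgeFinset → ℕ)
          * currentWeight G β (m - (k : ↥G.edgeFinset → ℕ)) * F m else 0) := by
    rintro m ⟨k, hk⟩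
    have hk' := Finset.mem_Iic.mp hk
    have hm : (k : ↥G.edgeFinset → ℕ) + (m - k) = m :=
      funext fun e => Nat.add_sub_cancel' (hk' e)
    simp only [hfR, e1, Equiv.coe_fn_symm_mk, hm]
  -- absolute values
  have habs : ∀ {c : Prop} [Decidable c] (x y : ↥G.edgeFinset → ℕ) (d : ℝ),
      |if c then currentWeight G β x * currentWeight G β y * d else 0|
        = if c then currentWeight G β x * currentWeight G β y * |d| else 0 := by
    intro c hc x y d
    split_ifs
    · rw [abs_mul, abs_mul, abs_of_pos (currentWeight_pos G hβ x),
        abs_of_pos (currentWeight_pos G hβ y)]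
    · exact abs_zero
  -- conclude
  rw [← Equiv.tsum_eq e1.symm fL, ← Equiv.tsum_eq e1.symm fR]
  apply tsum_sigma_congr
  · intro m
    have s1 : ∑ k : ↥(Finset.Iic m), fL (e1.symm ⟨m, k⟩)
        = ∑ k : ↥(Finset.Iic m), (if sources G (k : ↥G.edgeFinset → ℕ) = A ∧
            sources G (m - (k : ↥G.edgeFinset → ℕ)) = B then
          currentWeight G β (k : ↥G.edgeFinset → ℕ)
            * currentWeight G β (m - (k : ↥G.edgeFinset → ℕ)) * F m else 0) :=
      Finset.sum_congr rfl fun k _ => hLval m k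
    have s2 : ∑ k : ↥(Finset.Iic m), fR (e1.symm ⟨m, k⟩)
        = ∑ k : ↥(Finset.Iic m), (if sources G (k : ↥G.edgeFinset → ℕ) = (symmDiff A B) ∧
            sources G (m - (k : ↥G.edgeFinset → ℕ)) = ∅ ∧
            (∃ k' : ↥G.edgeFinset → ℕ, k' ≤ m ∧ sources G k' = B) then
          currentWeight G β (k : ↥G.edgeFinset → ℕ)
            * currentWeight G β (m - (k : ↥G.edgeFinset → ℕ)) * F m else 0) :=
      Finset.sum_congr rfl fun k _ => hRval m k
    rw [s1, s2, hfiberL m (F m), hfiberR m (F m), star_identity G m A B]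
  · intro m
    have s1 : ∑ k : ↥(Finset.Iic m), |fL (e1.symm ⟨m, k⟩)|
        = ∑ k : ↥(Finset.Iic m), (if sources G (k : ↥G.edgeFinset → ℕ) = A ∧
            sources G (m - (k : ↥G.edgeFinset → ℕ)) = B then
          currentWeight G β (k : ↥G.edgeFinset → ℕ)
            * currentWeight G β (m - (k : ↥G.edgeFinset → ℕ)) * |F m| else 0) :=
      Finset.sum_congr rfl fun k _ => by rw [hLval m k]; exact habs _ _ _
    have s2 : ∑ k : ↥(Finset.Iic m), |fR (e1.symm ⟨m, k⟩)|
        = ∑ k : ↥(Finset.Iic m), (if sources G (k : ↥G.edgeFinset → ℕ) = (symmDiff A B) ∧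
            sources G (m - (k : ↥G.edgeFinset → ℕ)) = ∅ ∧
            (∃ k' : ↥G.edgeFinset → ℕ, k' ≤ m ∧ sources G k' = B) then
          currentWeight G β (k : ↥G.edgeFinset → ℕ)
            * currentWeight G β (m - (k : ↥G.edgeFinset → ℕ)) * |F m| else 0) :=
      Finset.sum_congr rfl fun k _ => by rw [hRval m k]; exact habs _ _ _
    rw [s1, s2, hfiberL m |F m|, hfiberR m |F m|, star_identity G m A B]
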